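/- Let n ≥ 1 and k ≥ 1 be integers and a_1, …, a_{3n} positive integers with k/4 < a_i < k/2 for each i and a_1 + ⋯ + a_{3n} = nk, and let G_{A,k} be the graph constructed as follows: take 3n pairwise disjoint copies K^(1), …, K^(3n) of the complete bipartite graph K_{2k,2k−1}, and in K^(i) let X^(i) denote the part of size 2k; add three new vertices u, v, w; for each i, partition X^(i) into three sets of sizes 2a_i, k − a_i, and k − a_i, joining them to u, v, w respectively. Then reg(G_{A,k}) ≥ n. -/

import Mathlib

open SimpleGraph

variable {V : Type*}

/-- The number of edges of the edge set `F` incident with the vertex `v`. -/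
noncomputable def edgeDeg (F : Set (Sym2 V)) (v : V) : ℕ := {e ∈ F | v ∈ e}.ncard

/-- The subgraph induced by the edge set `F` (on the vertices incident with edges of `F`)
is `r`-regular: every vertex incident with an edge of `F` lies on exactly `r` edges of `F`. -/
def IsRegularEdgeSet (F : Set (Sym2 V)) (r : ℕ) : Prop :=
  ∀ v : V, (∃ e ∈ F, v ∈ e) → edgeDeg F v = r

/-- `P` is a partition of the edge set of `G` into `t` nonempty parts, each of which
induces a regular subgraph. -/
def IsRegularPartition (G : SimpleGraph V) {t : ℕ} (P : Fin t → Set (Sym2 V)) : Prop :=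
  (∀ i, (P i).Nonempty) ∧ (∀ i j, i ≠ j → Disjoint (P i) (P j)) ∧
    (⋃ i, P i) = G.edgeSet ∧ ∀ i, ∃ r, IsRegularEdgeSet (P i) r

/-- The regular number of `G`: the minimum number of parts in a partition of the edge set of `G`
into nonempty subsets each of which induces a regular subgraph. -/
noncomputable def regNum (G : SimpleGraph V) : ℕ :=
  sInf {t | ∃ P : Fin t → Set (Sym2 V), IsRegularPartition G P}

/-- `C` is a proper edge coloring of `G` with `n` colors: edges sharing a vertex get
distinct colors. -/
def IsProperEdgeColoring (G : SimpleGraph V) {n : ℕ} (C : Sym2 V → Fin n) : Prop :=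
  ∀ e₁ ∈ G.edgeSet, ∀ e₂ ∈ G.edgeSet, e₁ ≠ e₂ → (∃ x, x ∈ e₁ ∧ x ∈ e₂) → C e₁ ≠ C e₂

/-- The edge chromatic number of `G`: the minimum number of colors of a proper edge coloring. -/
noncomputable def edgeChromNum (G : SimpleGraph V) : ℕ :=
  sInf {n | ∃ C : Sym2 V → Fin n, IsProperEdgeColoring G C}

/-- The graph `G_{A,k}`: `3n` disjoint copies of the complete bipartite graph `K_{2k,2k-1}`
(copy `i` has parts `Fin (2k)` and `Fin (2k-1)`), together with three extra vertices
`u = 2`... namely `Sum.inr 0 = u`, `Sum.inr 1 = v`, `Sum.inr 2 = w`; the vertex `x` of the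
part `X⁽ⁱ⁾ = Fin (2k)` of copy `i` is joined to the extra vertex `σ i x`. -/
def gadgetGraph (n k : ℕ) (σ : Fin (3 * n) → Fin (2 * k) → Fin 3) :
    SimpleGraph ((Fin (3 * n) × (Fin (2 * k) ⊕ Fin (2 * k - 1))) ⊕ Fin 3) :=
  SimpleGraph.fromRel (fun p q =>
    match p, q with
    | Sum.inl (i, Sum.inl _), Sum.inl (j, Sum.inr _) => i = j
    | Sum.inl (i, Sum.inl x), Sum.inr c => σ i x = c
    | _, _ => False)


section Aux

lemma adj_u_iff {n k : ℕ} {σ : Fin (3 * n) → Fin (2 * k) → Fin 3}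
    (p : (Fin (3 * n) × (Fin (2 * k) ⊕ Fin (2 * k - 1))) ⊕ Fin 3) :
    (gadgetGraph n k σ).Adj (Sum.inr 0) p ↔
      ∃ i x, σ i x = 0 ∧ p = Sum.inl (i, Sum.inl x) := by
  rcases p with ⟨i, x | y⟩ | c <;>
    simp [gadgetGraph, SimpleGraph.fromRel_adj]

lemma adj_x_iff {n k : ℕ} {σ : Fin (3 * n) → Fin (2 * k) → Fin 3}
    (i : Fin (3 * n)) (x : Fin (2 * k))
    (q : (Fin (3 * n) × (Fin (2 * k) ⊕ Fin (2 * k - 1))) ⊕ Fin 3) :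
    (gadgetGraph n k σ).Adj (Sum.inl (i, Sum.inl x)) q ↔
      (∃ y, q = Sum.inl (i, Sum.inr y)) ∨ q = Sum.inr (σ i x) := by
  rcases q with ⟨j, x' | y⟩ | c <;>
    simp [gadgetGraph, SimpleGraph.fromRel_adj, eq_comm, and_comm]

lemma edgeDeg_edgeSet [DecidableEq V] (G : SimpleGraph V) (v : V) :
    edgeDeg G.edgeSet v = Nat.card (G.neighborSet v) := by
  have h1 : {e ∈ G.edgeSet | v ∈ e} = G.incidenceSet v := rfl
  rw [edgeDeg, h1, ← Nat.card_coe_set_eq,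
    Nat.card_congr (G.incidenceSetEquivNeighborSet v), Nat.card_coe_set_eq,
    ← Nat.card_coe_set_eq]

lemma edgeDeg_mono [Finite V] {F F' : Set (Sym2 V)} (h : F ⊆ F') (v : V) :
    edgeDeg F v ≤ edgeDeg F' v :=
  Set.ncard_le_ncard (fun e he => ⟨h he.1, he.2⟩) (Set.toFinite _)

lemma filter_prod_card {A B : Type*} [Fintype A] [Fintype B] (P : A → B → Prop)
    [∀ a b, Decidable (P a b)] :
    (Finset.univ.filter fun q : A × B => P q.1 q.2).card
      = ∑ a, (Finset.univ.filter fun b => P a b).card := by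
  rw [Finset.card_filter, ← Finset.univ_product_univ, Finset.sum_product]
  exact Finset.sum_congr rfl fun a _ => (Finset.card_filter _ _).symm

lemma ncard_iUnion_le {α : Type*} [Finite α] {t : ℕ} (s : Fin t → Set α) :
    (⋃ i, s i).ncard ≤ ∑ i, (s i).ncard := by
  classical
  have : Fintype α := Fintype.ofFinite α
  simp only [Set.ncard_eq_toFinset_card']
  rw [Set.toFinset_iUnion]
  exact Finset.card_biUnion_le

lemma card_nbhd_u {n k : ℕ} (σ : Fin (3 * n) → Fin (2 * k) → Fin 3) :
    Nat.card ((gadgetGraph n k σ).neighborSet (Sum.inr 0))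
      = (Finset.univ.filter fun q : Fin (3 * n) × Fin (2 * k) => σ q.1 q.2 = 0).card := by
  classical
  have hset : (gadgetGraph n k σ).neighborSet (Sum.inr 0)
      = (fun q : Fin (3 * n) × Fin (2 * k) => Sum.inl (q.1, Sum.inl q.2)) ''
          {q | σ q.1 q.2 = 0} := by
    ext p
    simp only [mem_neighborSet, adj_u_iff, Set.mem_image, Set.mem_setOf_eq, Prod.exists]
    constructor
    · rintro ⟨i, x, h, rfl⟩; exact ⟨i, x, h, rfl⟩
    · rintro ⟨i, x, h, rfl⟩; exact ⟨i, x, h, rfl⟩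
  rw [Nat.card_coe_set_eq, hset, Set.ncard_image_of_injective _ (by
    rintro ⟨i, x⟩ ⟨i', x'⟩ h
    simpa [Prod.ext_iff] using h), Set.ncard_eq_toFinset_card']
  congr 1
  ext q
  simp

lemma card_nbhd_x {n k : ℕ} (σ : Fin (3 * n) → Fin (2 * k) → Fin 3) (hk : 1 ≤ k)
    (i : Fin (3 * n)) (x : Fin (2 * k)) :
    Nat.card ((gadgetGraph n k σ).neighborSet (Sum.inl (i, Sum.inl x))) = 2 * k := by
  classical
  have hset : (gadgetGraph n k σ).neighborSet (Sum.inl (i, Sum.inl x))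
      = (fun y : Fin (2 * k - 1) => (Sum.inl (i, Sum.inr y) :
            (Fin (3 * n) × (Fin (2 * k) ⊕ Fin (2 * k - 1))) ⊕ Fin 3)) '' Set.univ
          ∪ {Sum.inr (σ i x)} := by
    ext p
    simp only [mem_neighborSet, adj_x_iff, Set.mem_union, Set.mem_image, Set.mem_univ,
      Set.mem_singleton_iff, true_and]
    constructor
    · rintro (⟨y, rfl⟩ | rfl)
      · exact Or.inl ⟨y, rfl⟩
      · exact Or.inr rfl
    · rintro (⟨y, rfl⟩ | rfl)
      · exact Or.inl ⟨y, rfl⟩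
      · exact Or.inr rfl
  rw [Nat.card_coe_set_eq, hset, Set.ncard_union_eq (by
      simp only [Set.disjoint_singleton_right, Set.mem_image]
      rintro ⟨y, -, h⟩
      exact absurd h (by simp)) (Set.toFinite _) (Set.toFinite _),
    Set.ncard_image_of_injective _ (by intro y y' h; simpa using h),
    Set.ncard_univ, Set.ncard_singleton, Nat.card_eq_fintype_card, Fintype.card_fin]
  omega

/-- Every graph on a finite vertex type admits a regular partition (into single edges). -/
lemma exists_regular_partition [Finite V] (G : SimpleGraph V) :
    ∃ t : ℕ, ∃ P : Fin t → Set (Sym2 V), IsRegularPartition G P := by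
  classical
  have : Finite G.edgeSet := Set.toFinite _
  let E := Finite.equivFin G.edgeSet
  refine ⟨Nat.card G.edgeSet, fun j => {(E.symm j : Sym2 V)}, fun j => ⟨_, rfl⟩, ?_, ?_, ?_⟩
  · intro i j hij
    simp only [Set.disjoint_singleton_left, Set.mem_singleton_iff]
    exact fun h => hij (E.symm.injective (Subtype.coe_injective h))
  · ext e
    simp only [Set.mem_iUnion, Set.mem_singleton_iff]
    constructor
    · rintro ⟨j, rfl⟩; exact (E.symm j).2
    · intro he; exact ⟨E ⟨e, he⟩, by rw [Equiv.symm_apply_apply]⟩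
  · intro j
    refine ⟨1, fun v hv => ?_⟩
    obtain ⟨e, he, hve⟩ := hv
    rw [Set.mem_singleton_iff] at he
    have hv' : v ∈ ((E.symm j : G.edgeSet) : Sym2 V) := he ▸ hve
    have hset : {e' ∈ ({((E.symm j : G.edgeSet) : Sym2 V)} : Set (Sym2 V)) | v ∈ e'}
        = {((E.symm j : G.edgeSet) : Sym2 V)} := by
      ext e'
      simp only [Set.mem_setOf_eq, Set.mem_singleton_iff]
      exact ⟨fun h => h.1, fun h => ⟨h, h ▸ hv'⟩⟩
    rw [edgeDeg, hset, Set.ncard_singleton]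

end Aux

/-- the graph `G_{A,k}` always has regular number at least `n`. -/
theorem regNum_gadget_ge (n k : ℕ) (hn : 1 ≤ n) (hk : 1 ≤ k)
    (a : Fin (3 * n) → ℕ)
    (ha : ∀ i, k < 4 * a i ∧ 2 * a i < k)
    (hsum : ∑ i, a i = n * k)
    (σ : Fin (3 * n) → Fin (2 * k) → Fin 3)
    (hσ0 : ∀ i, (Finset.univ.filter fun x => σ i x = 0).card = 2 * a i)
    (hσ1 : ∀ i, (Finset.univ.filter fun x => σ i x = 1).card = k - a i)
    (hσ2 : ∀ i, (Finset.univ.filter fun x => σ i x = 2).card = k - a i) :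
    n ≤ regNum (gadgetGraph n k σ) := by
  classical
  apply le_csInf
  · obtain ⟨t, P, hP⟩ := exists_regular_partition (gadgetGraph n k σ)
    exact ⟨t, P, hP⟩
  · rintro t ⟨P, hPne, hPdisj, hPunion, hPreg⟩
    set G := gadgetGraph n k σ with hGdef
    set u : (Fin (3 * n) × (Fin (2 * k) ⊕ Fin (2 * k - 1))) ⊕ Fin 3 := Sum.inr 0 with hu
    have hPsub : ∀ j, P j ⊆ G.edgeSet := fun j => hPunion ▸ Set.subset_iUnion P j
    have hdegu : edgeDeg G.edgeSet u = 2 * (n * k) := by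
      rw [edgeDeg_edgeSet, hGdef, hu, card_nbhd_u, filter_prod_card (fun i x => σ i x = 0)]
      simp only [hσ0]
      rw [← Finset.mul_sum, hsum]
    have hsplit : edgeDeg G.edgeSet u ≤ ∑ j, edgeDeg (P j) u := by
      have hs : {e ∈ G.edgeSet | u ∈ e} = ⋃ j, {e ∈ P j | u ∈ e} := by
        rw [← hPunion]
        ext e
        simp only [Set.mem_setOf_eq, Set.mem_iUnion]
        tauto
      rw [edgeDeg, hs]
      exact ncard_iUnion_le _
    have hbound : ∀ j, edgeDeg (P j) u ≤ 2 * k := by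
      intro j
      by_cases hne' : {e ∈ P j | u ∈ e}.Nonempty
      · obtain ⟨e0, he0P, he0u⟩ := hne'
        obtain ⟨r, hr⟩ := hPreg j
        have h1 : edgeDeg (P j) u = r := hr u ⟨e0, he0P, he0u⟩
        obtain ⟨y, rfl⟩ := Sym2.mem_iff_exists.mp he0u
        have hadj : G.Adj u y := G.mem_edgeSet.mp (hPsub j he0P)
        obtain ⟨i, x, -, rfl⟩ := (adj_u_iff y).mp hadj
        have h2 : edgeDeg (P j) (Sum.inl (i, Sum.inl x)) = r :=
          hr _ ⟨_, he0P, Sym2.mem_mk_right _ _⟩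
        rw [h1, ← h2]
        calc edgeDeg (P j) (Sum.inl (i, Sum.inl x))
            ≤ edgeDeg G.edgeSet (Sum.inl (i, Sum.inl x)) := edgeDeg_mono (hPsub j) _
          _ = 2 * k := by rw [edgeDeg_edgeSet, hGdef, card_nbhd_x σ hk]
      · rw [Set.not_nonempty_iff_eq_empty] at hne'
        simp [edgeDeg, hne']
    have hmain : n * (2 * k) ≤ t * (2 * k) := by
      have : 2 * (n * k) ≤ t * (2 * k) := by
        calc 2 * (n * k) = edgeDeg G.edgeSet u := hdegu.symm
          _ ≤ ∑ j, edgeDeg (P j) u := hsplit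
          _ ≤ ∑ _j : Fin t, 2 * k := Finset.sum_le_sum fun j _ => hbound j
          _ = t * (2 * k) := by simp [Finset.sum_const, mul_comm]
      linarith [this]
    exact Nat.le_of_mul_le_mul_right hmain (by omega)
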